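/- Every derivation of the Block-type Lie algebra 𝓑 can be written as ad(a) + λ d for some a ∈ 𝓑 and λ ∈ ℂ, where d(L_{β,j}) = β L_{β,j}; that is, Der(𝓑) = ad(𝓑) ⊕ ℂd. -/

import Mathlib

noncomputable section

abbrev B := (ℤ × ℕ) →₀ ℂ

/-- basis element `L α i` -/
def L (α : ℤ) (i : ℕ) : B := Finsupp.single (α, i) 1

/-- structure constant `(α-1)(j+1) - (β-1)(i+1)` -/
def coef (p q : ℤ × ℕ) : ℂ :=
  ((p.1 - 1) * ((q.2 : ℤ) + 1) - (q.1 - 1) * ((p.2 : ℤ) + 1) : ℤ)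

/-- the Block-type bracket, as a bilinear map -/
def br : B →ₗ[ℂ] B →ₗ[ℂ] B :=
  Finsupp.lsum ℂ fun p => LinearMap.toSpanSingleton ℂ _
    (Finsupp.lsum ℂ fun q => LinearMap.toSpanSingleton ℂ _
      (coef p q • L (p.1 + q.1) (p.2 + q.2)))

/-- the outer derivation `d`, with `d (L β j) = β • L β j` -/
def dmap : B →ₗ[ℂ] B :=
  Finsupp.lsum ℂ fun p => LinearMap.toSpanSingleton ℂ _ ((p.1 : ℂ) • L p.1 p.2)

def IsDer (D : B →ₗ[ℂ] B) : Prop := ∀ x y, D (br x y) = br (D x) y + br x (D y)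

def Is2Local (Δ : B → B) : Prop :=
  ∀ x y, ∃ D : B →ₗ[ℂ] B, IsDer D ∧ Δ x = D x ∧ Δ y = D y

section

lemma br_single_right (z : B) (β : ℤ) (j : ℕ) :
    br z (L β j) = z.sum fun p cp => (cp * coef p (β, j)) • L (p.1 + β) (p.2 + j) := by
  rw [br, Finsupp.lsum_apply, LinearMap.finsupp_sum_apply]
  refine Finsupp.sum_congr fun p hp => ?_
  simp [L, LinearMap.toSpanSingleton_apply, Finsupp.lsum_single, mul_smul]

lemma br_single_left (α : ℤ) (i : ℕ) (z : B) :
    br (L α i) z = z.sum fun q cq => (cq * coef (α, i) q) • L (α + q.1) (i + q.2) := by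
  rw [br, L, Finsupp.lsum_single, LinearMap.toSpanSingleton_apply, one_smul,
    Finsupp.lsum_apply]
  refine Finsupp.sum_congr fun q hq => ?_
  simp [LinearMap.toSpanSingleton_apply, mul_smul]
end
section
lemma br_right_apply (z : B) (β : ℤ) (j : ℕ) (s : ℤ) (t : ℕ) :
    (br z (L β j)) (s + β, t + j) = z (s, t) * coef (s, t) (β, j) := by
  rw [br_single_right, Finsupp.sum_apply]
  rw [Finsupp.sum_eq_single (s, t)]
  · simp [L, Finsupp.single_apply]
  · intro p hp hne
    simp only [Finsupp.smul_apply, L, Finsupp.single_apply]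
    rw [if_neg, smul_zero]
    intro h
    apply hne
    obtain ⟨h1, h2⟩ := Prod.mk.injEq .. ▸ h
    exact Prod.ext (by omega) (by omega)
  · intro h; simp [h]

lemma br_right_apply₀ (z : B) (β : ℤ) (j : ℕ) (s : ℤ) (t : ℕ) (ht : t < j) :
    (br z (L β j)) (s, t) = 0 := by
  rw [br_single_right, Finsupp.sum_apply]
  apply Finset.sum_eq_zero
  intro p hp
  simp only [Finsupp.smul_apply, L, Finsupp.single_apply]
  rw [if_neg, smul_zero]
  intro h
  obtain ⟨h1, h2⟩ := Prod.mk.injEq .. ▸ h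
  omega

lemma br_left_apply (α : ℤ) (i : ℕ) (z : B) (s : ℤ) (t : ℕ) :
    (br (L α i) z) (s + α, t + i) = coef (α, i) (s, t) * z (s, t) := by
  rw [br_single_left, Finsupp.sum_apply]
  rw [Finsupp.sum_eq_single (s, t)]
  · simp only [Finsupp.smul_apply, L, Finsupp.single_apply]
    rw [if_pos (by exact Prod.ext (by omega) (by omega)), smul_eq_mul, mul_one, mul_comm]
  · intro p hp hne
    simp only [Finsupp.smul_apply, L, Finsupp.single_apply]
    rw [if_neg, smul_zero]
    intro h
    apply hne
    obtain ⟨h1, h2⟩ := Prod.mk.injEq .. ▸ h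
    exact Prod.ext (by omega) (by omega)
  · intro h; simp [h]

lemma br_left_apply₀ (α : ℤ) (i : ℕ) (z : B) (s : ℤ) (t : ℕ) (ht : t < i) :
    (br (L α i) z) (s, t) = 0 := by
  rw [br_single_left, Finsupp.sum_apply]
  apply Finset.sum_eq_zero
  intro p hp
  simp only [Finsupp.smul_apply, L, Finsupp.single_apply]
  rw [if_neg, smul_zero]
  intro h
  obtain ⟨h1, h2⟩ := Prod.mk.injEq .. ▸ h
  omega
end
section
lemma br_single_single (α : ℤ) (i : ℕ) (β : ℤ) (j : ℕ) :
    br (L α i) (L β j) = coef (α, i) (β, j) • L (α + β) (i + j) := by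
  simp [br, L, Finsupp.lsum_single, LinearMap.toSpanSingleton_apply]

lemma dmap_single (β : ℤ) (j : ℕ) : dmap (L β j) = (β : ℂ) • L β j := by
  simp [dmap, L, Finsupp.lsum_single, LinearMap.toSpanSingleton_apply]

lemma dmap_apply (z : B) (s : ℤ) (t : ℕ) : (dmap z) (s, t) = (s : ℂ) * z (s, t) := by
  rw [dmap, Finsupp.lsum_apply, Finsupp.sum_apply]
  rw [Finsupp.sum_eq_single (s, t)]
  · simp [L, LinearMap.toSpanSingleton_apply, Finsupp.single_apply, mul_comm]
  · intro p hp hne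
    simp only [LinearMap.toSpanSingleton_apply, Finsupp.smul_apply, smul_eq_mul,
      Finsupp.smul_apply, L, Finsupp.single_apply]
    rw [if_neg (by exact fun h => hne (by exact h ▸ rfl))]; ring
  · intro h; simp [h]

lemma L_apply_self (β : ℤ) (j : ℕ) : (L β j) (β, j) = 1 := by simp [L]

lemma L_apply_ne (β : ℤ) (j : ℕ) (p : ℤ × ℕ) (h : p ≠ (β, j)) : (L β j) p = 0 := by
  rw [L, Finsupp.single_apply_eq_zero]
  exact fun h' => (h h').elim
end
section
lemma single_eq_smul_L (p : ℤ × ℕ) (c : ℂ) : Finsupp.single p c = c • L p.1 p.2 := by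
  rw [L, Finsupp.smul_single, smul_eq_mul, mul_one]

lemma jacobiL (α β γ : ℤ) (i j k : ℕ) :
    br (L α i) (br (L β j) (L γ k)) =
      br (br (L α i) (L β j)) (L γ k) + br (L β j) (br (L α i) (L γ k)) := by
  simp only [br_single_single, map_smul, LinearMap.smul_apply, br_single_single, smul_smul]
  rw [show α + (β + γ) = α + β + γ by ring, show i + (j + k) = i + j + k by omega,
    show β + (α + γ) = α + β + γ by ring, show j + (i + k) = i + j + k by omega,
    ← add_smul]
  congr 1
  simp only [coef]
  push_cast
  ring

lemma isDer_br (a : B) : IsDer (br a) := by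
  intro x y
  induction a using Finsupp.induction_linear with
  | zero => simp
  | add f g hf hg => simp only [map_add, LinearMap.add_apply, hf, hg]; abel
  | single p c =>
    induction x using Finsupp.induction_linear with
    | zero => simp
    | add f g hf hg => simp only [map_add, LinearMap.add_apply, hf, hg]; abel
    | single q c' =>
      induction y using Finsupp.induction_linear with
      | zero => simp
      | add f g hf hg => simp only [map_add, LinearMap.add_apply, hf, hg]; abel
      | single r c'' =>
        simp only [single_eq_smul_L, map_smul, LinearMap.smul_apply, map_smul]
        rw [jacobiL]
        simp only [smul_add]
        module

lemma isDer_dmap : IsDer dmap := by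
  intro x y
  induction x using Finsupp.induction_linear with
  | zero => simp
  | add f g hf hg => simp only [map_add, LinearMap.add_apply, hf, hg]; abel
  | single q c' =>
    induction y using Finsupp.induction_linear with
    | zero => simp
    | add f g hf hg => simp only [map_add, LinearMap.add_apply, hf, hg]; abel
    | single r c'' =>
      simp only [single_eq_smul_L, map_smul, LinearMap.smul_apply, map_smul]
      rw [br_single_single, map_smul, dmap_single, dmap_single, dmap_single]
      simp only [map_smul, LinearMap.smul_apply, br_single_single]
      simp only [smul_smul, ← add_smul]
      congr 1
      simp only [coef]
      push_cast
      ring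
end
section
lemma isDer_sub {D D' : B →ₗ[ℂ] B} (h : IsDer D) (h' : IsDer D') : IsDer (D - D') := by
  intro x y
  simp only [LinearMap.sub_apply, h x y, h' x y, map_sub, LinearMap.sub_apply]
  abel

lemma isDer_smul {D : B →ₗ[ℂ] B} (c : ℂ) (h : IsDer D) : IsDer (c • D) := by
  intro x y
  simp only [LinearMap.smul_apply, h x y, map_smul, smul_add, LinearMap.smul_apply]

lemma master {D : B →ₗ[ℂ] B} (hD : IsDer D) (α : ℤ) (i : ℕ) (β : ℤ) (j : ℕ) :
    coef (α, i) (β, j) • D (L (α + β) (i + j)) =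
      br (D (L α i)) (L β j) + br (L α i) (D (L β j)) := by
  rw [← map_smul, ← br_single_single]
  exact hD (L α i) (L β j)
end
section
def tweak (f : B) (g : ℤ × ℕ → ℂ → ℂ) : B := f.sum fun p v => Finsupp.single p (g p v)

lemma tweak_apply (f : B) (g : ℤ × ℕ → ℂ → ℂ) (hg : ∀ p, g p 0 = 0) (q : ℤ × ℕ) :
    tweak f g q = g q (f q) := by
  rw [tweak, Finsupp.sum_apply, Finsupp.sum_eq_single q]
  · rw [Finsupp.single_eq_same]
  · intro p hp hne; exact Finsupp.single_eq_of_ne' hne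
  · intro h
    simp [h, hg]

def aone (D : B →ₗ[ℂ] B) : B :=
  tweak (D (L 0 0)) fun p v => if (p.1 + (p.2 : ℤ)) = 0 then 0 else v / ((p.1 : ℂ) + (p.2 : ℂ))

lemma coef_eval (a c : ℤ) (b d : ℕ) :
    coef (a, b) (c, d) = ((a : ℂ) - 1) * ((d : ℂ) + 1) - ((c : ℂ) - 1) * ((b : ℂ) + 1) := by
  simp only [coef]; push_cast; ring

lemma cast_ne (n : ℤ) (h : n ≠ 0) : (n : ℂ) ≠ 0 := Int.cast_ne_zero.mpr h

lemma Done_L00 {D : B →ₗ[ℂ] B} (hD : IsDer D) : (D - br (aone D)) (L 0 0) = 0 := by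
  set D₁ := D - br (aone D) with hD₁
  have hder : IsDer D₁ := isDer_sub hD (isDer_br _)
  have claim1 : ∀ (s : ℤ) (t : ℕ), (s + (t : ℤ)) ≠ 0 → (D₁ (L 0 0)) (s, t) = 0 := by
    intro s t hst
    have hbr : (br (aone D) (L 0 0)) (s, t) = (aone D) (s, t) * coef (s, t) (0, 0) := by
      simpa using br_right_apply (aone D) 0 0 s t
    have ha : (aone D) (s, t) = (D (L 0 0)) (s, t) / ((s : ℂ) + (t : ℂ)) := by
      rw [aone, tweak_apply _ _ (fun p => by simp)]
      simp only [if_neg hst]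
    have hcoef : coef (s, t) (0, 0) = (s : ℂ) + (t : ℂ) := by rw [coef_eval]; ring
    have hne : ((s : ℂ) + (t : ℂ)) ≠ 0 := by
      have := cast_ne _ hst; push_cast at this ⊢; convert this using 2 <;> push_cast <;> ring
    simp only [hD₁, LinearMap.sub_apply, Finsupp.sub_apply, hbr, ha, hcoef]
    field_simp
    ring
  have claim2 : ∀ k : ℕ, (D₁ (L 0 0)) (-(k : ℤ), k) = 0 := by
    intro k
    have hm := master hder 0 0 0 1
    norm_num at hm
    have heval := congrArg (fun z => z (-(k : ℤ) , k + 1)) hm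
    simp only [Finsupp.smul_apply, Finsupp.add_apply, Finsupp.coe_add, Pi.add_apply] at heval
    have h1 : (br (D₁ (L 0 0)) (L 0 1)) (-(k:ℤ), k + 1) =
        (D₁ (L 0 0)) (-(k:ℤ), k) * coef (-(k:ℤ), k) (0, 1) := by
      simpa using br_right_apply (D₁ (L 0 0)) 0 1 (-(k:ℤ)) k
    have h2 : (br (L 0 0) (D₁ (L 0 1))) (-(k:ℤ), k + 1) =
        coef (0, 0) (-(k:ℤ), k+1) * (D₁ (L 0 1)) (-(k:ℤ), k + 1) := by
      simpa using br_left_apply 0 0 (D₁ (L 0 1)) (-(k:ℤ)) (k+1)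
    rw [h1, h2] at heval
    have e1 : coef (0, 0) (0, 1) = (-1 : ℂ) := by
      rw [coef_eval]; norm_num
    have e2 : coef (0, 0) (-(k:ℤ), k+1) = (-1 : ℂ) := by rw [coef_eval]; push_cast; ring
    have e3 : coef (-(k:ℤ), k) (0, 1) = -((k : ℂ) + 1) := by rw [coef_eval]; push_cast; ring
    rw [e1, e2, e3, smul_eq_mul] at heval
    have hk : ((k : ℂ) + 1) ≠ 0 := Nat.cast_add_one_ne_zero k
    have hv : (D₁ (L 0 0)) (-(k:ℤ), k) * ((k:ℂ) + 1) = 0 := by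
      linear_combination heval
    exact (mul_eq_zero.mp hv).resolve_right hk
  ext p
  obtain ⟨s, t⟩ := p
  by_cases h : s + (t : ℤ) = 0
  · have hs : s = -(t : ℤ) := by omega
    rw [hs]
    simpa using claim2 t
  · simpa using claim1 s t h
end
section
variable {E : B →ₗ[ℂ] B}

lemma hdeg_of (hE : IsDer E) (h00 : E (L 0 0) = 0) (β : ℤ) (j : ℕ) (s : ℤ) (t : ℕ)
    (h : (s + (t:ℤ)) ≠ β + j) : (E (L β j)) (s, t) = 0 := by
  have hm := master hE 0 0 β j
  simp only [h00, map_zero, LinearMap.zero_apply, zero_add] at hm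
  have heval := congrArg (fun z => z (s, t)) hm
  simp only [Finsupp.smul_apply, smul_eq_mul] at heval
  have h2 : (br (L 0 0) (E (L β j))) (s, t) = coef (0, 0) (s, t) * (E (L β j)) (s, t) := by
    simpa using br_left_apply 0 0 (E (L β j)) s t
  rw [h2, coef_eval, coef_eval] at heval
  have hne : ((s:ℂ) + t) - ((β:ℂ) + j) ≠ 0 := by
    have : ((s + t - (β + j) : ℤ) : ℂ) ≠ 0 := cast_ne _ (by omega)
    push_cast at this
    convert this using 1
  have : (((s:ℂ) + t) - ((β:ℂ) + j)) * (E (L β j)) (s, t) = 0 := by linear_combination heval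
  exact (mul_eq_zero.mp this).resolve_left hne

lemma Tstar (hE : IsDer E) (h10 : E (L 1 0) = 0) (β : ℤ) (j : ℕ) (s : ℤ) (t : ℕ) :
    (1 - (β:ℂ)) * (E (L (β + 1) j)) (s, t) = (2 - (s:ℂ)) * (E (L β j)) (s - 1, t) := by
  have hm := master hE 1 0 β j
  simp only [h10, map_zero, LinearMap.zero_apply, zero_add] at hm
  have heval := congrArg (fun z => z (s, t)) hm
  simp only [Finsupp.smul_apply, smul_eq_mul] at heval
  have h2 : (br (L 1 0) (E (L β j))) (s, t) = coef (1, 0) (s - 1, t) * (E (L β j)) (s - 1, t) := by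
    have := br_left_apply 1 0 (E (L β j)) (s - 1) t
    simpa using this
  rw [h2, coef_eval, coef_eval] at heval
  rw [show (1:ℤ) + β = β + 1 by ring] at heval
  push_cast at heval ⊢
  linear_combination heval

lemma Tse (hE : IsDer E) (hm10 : E (L (-1) 0) = 0) (β : ℤ) (j : ℕ) (s : ℤ) (t : ℕ) :
    (2 * (j:ℂ) + β + 1) * (E (L (β - 1) j)) (s, t) =
      (2 * (t:ℂ) + s + 2) * (E (L β j)) (s + 1, t) := by
  have hm := master hE (-1) 0 β j
  simp only [hm10, map_zero, LinearMap.zero_apply, zero_add] at hm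
  have heval := congrArg (fun z => z (s, t)) hm
  simp only [Finsupp.smul_apply, smul_eq_mul] at heval
  have h2 : (br (L (-1) 0) (E (L β j))) (s, t) =
      coef (-1, 0) (s + 1, t) * (E (L β j)) (s + 1, t) := by
    have := br_left_apply (-1) 0 (E (L β j)) (s + 1) t
    simpa using this
  rw [h2, coef_eval, coef_eval] at heval
  rw [show (-1:ℤ) + β = β - 1 by ring] at heval
  push_cast at heval ⊢
  linear_combination -heval

lemma Tw (hE : IsDer E) (h01 : E (L 0 1) = 0) (β : ℤ) (j : ℕ) (hz : E (L β j) = 0)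
    (hc : (1:ℤ) - j - 2 * β ≠ 0) : E (L β (j + 1)) = 0 := by
  have hm := master hE 0 1 β j
  simp only [h01, hz, map_zero, LinearMap.zero_apply, zero_add, add_zero] at hm
  rw [show 1 + j = j + 1 by ring] at hm
  have hc' : coef (0, 1) (β, j) ≠ 0 := by
    rw [coef_eval]
    have : ((1 - j - 2*β : ℤ) : ℂ) ≠ 0 := cast_ne _ hc
    push_cast at this
    intro h; apply this; rw [← h]; ring
  exact (smul_eq_zero.mp hm).resolve_left hc'
end
section
variable {E : B →ₗ[ℂ] B}

lemma Lzero_ext (β : ℤ) (j : ℕ) (h : ∀ (s : ℤ) (t : ℕ), (E (L β j)) (s, t) = 0) :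
    E (L β j) = 0 := by
  ext p; obtain ⟨s, t⟩ := p; simpa using h s t

lemma prop_up (hE : IsDer E) (h00 : E (L 0 0) = 0) (hm10 : E (L (-1) 0) = 0)
    (β : ℤ) (j : ℕ) (hβ : 0 ≤ β) (hz : E (L β j) = 0) : E (L (β + 1) j) = 0 := by
  apply Lzero_ext
  intro s t
  have h := Tse hE hm10 (β + 1) j (s - 1) t
  rw [show β + 1 - 1 = β by ring, hz] at h
  simp only [Finsupp.coe_zero, Pi.zero_apply, mul_zero, sub_add_cancel] at h
  by_cases hs : 2 * (t:ℤ) + (s - 1) + 2 = 0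
  · refine hdeg_of hE h00 (β + 1) j s t ?_
    omega
  · have hs' : (2 * (t:ℂ) + ((s:ℂ) - 1) + 2) ≠ 0 := by
      intro hq; apply cast_ne _ hs; push_cast; linear_combination hq
    have h' := h.symm
    push_cast at h'
    exact (mul_eq_zero.mp h').resolve_left hs'

lemma prop_down (hE : IsDer E) (h00 : E (L 0 0) = 0) (h10 : E (L 1 0) = 0)
    (hm10 : E (L (-1) 0) = 0)
    (β : ℤ) (j : ℕ) (hβ : β ≤ 0) (hz : E (L β j) = 0) : E (L (β - 1) j) = 0 := by
  by_cases hc : 2 * (j:ℤ) + β + 1 ≠ 0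
  · apply Lzero_ext
    intro s t
    have h := Tse hE hm10 β j s t
    rw [hz] at h
    simp only [Finsupp.coe_zero, Pi.zero_apply, mul_zero] at h
    have hc' : (2 * (j:ℂ) + β + 1) ≠ 0 := by
      intro hq; apply cast_ne _ hc; push_cast; linear_combination hq
    exact (mul_eq_zero.mp h).resolve_left hc'
  · -- β = -2j-1
    push_neg at hc
    apply Lzero_ext
    intro s t
    have h := Tstar hE h10 (β - 1) j (s + 1) t
    rw [show β - 1 + 1 = β by ring, hz] at h
    simp only [Finsupp.coe_zero, Pi.zero_apply, mul_zero, add_sub_cancel_right] at h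
    by_cases hs : s = 1
    · refine hdeg_of hE h00 (β - 1) j s t ?_
      omega
    · have hs' : (2 - ((s:ℂ) + 1)) ≠ 0 := by
        intro hq
        apply cast_ne (1 - s) (by omega)
        push_cast; linear_combination hq
      have h' := h.symm
      push_cast at h'
      exact (mul_eq_zero.mp h').resolve_left hs'

lemma prop_all (hE : IsDer E) (h00 : E (L 0 0) = 0) (h10 : E (L 1 0) = 0)
    (hm10 : E (L (-1) 0) = 0) (j : ℕ) (h0 : E (L 0 j) = 0) (h1 : E (L 1 j) = 0) :
    ∀ β : ℤ, E (L β j) = 0 := by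
  have hup : ∀ n : ℕ, E (L (n : ℤ) j) = 0 := by
    intro n
    induction n with
    | zero => simpa using h0
    | succ m ih =>
      have := prop_up hE h00 hm10 (m : ℤ) j (by positivity) ih
      exact_mod_cast this
  have hdown : ∀ n : ℕ, E (L (-(n : ℤ)) j) = 0 := by
    intro n
    induction n with
    | zero => simpa using h0
    | succ m ih =>
      have := prop_down hE h00 h10 hm10 (-(m : ℤ)) j (by omega) ih
      rw [show (-((m+1:ℕ) : ℤ)) = -(m:ℤ) - 1 by push_cast; ring]
      exact this
  intro β
  rcases le_or_gt 0 β with h | h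
  · have := hup β.toNat; rwa [Int.toNat_of_nonneg h] at this
  · have := hdown (-β).toNat
    rwa [Int.toNat_of_nonneg (by omega), neg_neg] at this
end
section
variable {E : B →ₗ[ℂ] B}

lemma hm10_of (hE : IsDer E) (h00 : E (L 0 0) = 0) (h10 : E (L 1 0) = 0) :
    E (L (-1) 0) = 0 := by
  have hm := master hE (-1) 0 1 0
  simp only [h10, map_zero, add_zero, neg_add_cancel, Nat.add_zero, h00, smul_zero] at hm
  apply Lzero_ext
  intro s t
  have heval := congrArg (fun z => z (s + 1, t)) hm.symm
  simp only [Finsupp.coe_zero, Pi.zero_apply] at heval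
  rw [show ((s:ℤ) + 1, t) = (s + 1, t + 0) from by simp] at heval
  rw [br_right_apply] at heval
  by_cases hs : s = 1
  · exact hdeg_of hE h00 (-1) 0 s t (by omega)
  · have hcoef : coef (s, t) (1, 0) = (s:ℂ) - 1 := by rw [coef_eval]; push_cast; ring
    rw [hcoef] at heval
    have hs' : ((s:ℂ) - 1) ≠ 0 := by
      intro hq; apply cast_ne (s - 1) (by omega); push_cast; linear_combination hq
    exact (mul_eq_zero.mp heval).resolve_right hs'

lemma L01_zero (hE : IsDer E) (h00 : E (L 0 0) = 0) (h10 : E (L 1 0) = 0)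
    (hm10 : E (L (-1) 0) = 0) (hslot : (E (L 0 1)) (0, 1) = 0) : E (L 0 1) = 0 := by
  apply Lzero_ext
  intro s t
  by_cases hline : s + (t:ℤ) = 1
  case neg => exact hdeg_of hE h00 0 1 s t (by omega)
  by_cases hs0 : s = 0
  · have ht1 : t = 1 := by omega
    rw [hs0, ht1]; exact hslot
  -- A : c (s+1,t) (1,1) = (1-s) c (s,t) (0,1)
  have hA := Tstar hE h10 0 1 (s + 1) t
  rw [zero_add] at hA
  simp only [Int.cast_zero, sub_zero, one_mul] at hA
  rw [show (s:ℤ) + 1 - 1 = s by ring] at hA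
  push_cast at hA
  -- B : 4 c (s,t) (0,1) = (2t+s+2) c (s+1,t) (1,1)
  have hB := Tse hE hm10 1 1 s t
  rw [show (1:ℤ) - 1 = 0 by ring] at hB
  have key : (4 : ℂ) * (E (L 0 1)) (s, t) =
      (2 * (t:ℂ) + s + 2) * ((2 - ((s:ℂ) + 1)) * (E (L 0 1)) (s, t)) := by
    rw [← hA]
    push_cast at hB ⊢
    linear_combination hB
  have ht : (t : ℤ) = 1 - s := by omega
  have htC : (t : ℂ) = 1 - (s : ℂ) := by
    have := congrArg (fun n : ℤ => (n : ℂ)) ht; push_cast at this; exact this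
  rw [htC] at key
  have key2 : ((s:ℂ) * ((s:ℂ) - 5)) * (E (L 0 1)) (s, t) = 0 := by linear_combination -key
  have hsne : ((s:ℂ) * ((s:ℂ) - 5)) ≠ 0 := by
    have h5 : s ≠ 5 := by omega
    apply mul_ne_zero
    · intro hq; apply cast_ne s hs0; exact hq
    · intro hq; apply cast_ne (s - 5) (by omega); push_cast; linear_combination hq
  exact (mul_eq_zero.mp key2).resolve_left hsne
end
section
variable {E : B →ₗ[ℂ] B}

lemma all_levels (hE : IsDer E) (h00 : E (L 0 0) = 0) (h10 : E (L 1 0) = 0)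
    (hm10 : E (L (-1) 0) = 0) (h01 : E (L 0 1) = 0) :
    ∀ (j : ℕ) (β : ℤ), E (L β j) = 0 := by
  intro j
  induction j with
  | zero => exact prop_all hE h00 h10 hm10 0 h00 h10
  | succ j ih =>
    have h1' : E (L 1 (j + 1)) = 0 := Tw hE h01 1 j (ih 1) (by omega)
    have h0' : E (L 0 (j + 1)) = 0 := by
      apply Lzero_ext
      intro s t
      have h := Tse hE hm10 1 (j + 1) s t
      rw [show (1:ℤ) - 1 = 0 by ring, h1'] at h
      simp only [Finsupp.coe_zero, Pi.zero_apply, mul_zero] at h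
      have hc : (2 * ((j:ℂ) + 1) + 1 + 1) ≠ 0 := by
        intro hq; apply cast_ne (2 * (j + 1) + 1 + 1) (by omega); push_cast
        linear_combination hq
      have h' : (2 * ((j:ℂ) + 1) + 1 + 1) * (E (L 0 (j+1))) (s, t) = 0 := by
        push_cast at h ⊢; linear_combination h
      exact (mul_eq_zero.mp h').resolve_left hc
    exact prop_all hE h00 h10 hm10 (j + 1) h0' h1'

lemma E_eq_zero (hE : IsDer E) (h00 : E (L 0 0) = 0) (h10 : E (L 1 0) = 0)
    (h01slot : (E (L 0 1)) (0, 1) = 0)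
    (hdegE : True) : E = 0 := by
  have hm10 := hm10_of hE h00 h10
  have h01 := L01_zero hE h00 h10 hm10 h01slot
  have hall := all_levels hE h00 h10 hm10 h01
  apply Finsupp.lhom_ext'
  intro p
  apply LinearMap.ext_ring
  simp only [LinearMap.comp_apply, Finsupp.lsingle_apply, LinearMap.zero_comp]
  have : Finsupp.single p (1:ℂ) = L p.1 p.2 := rfl
  rw [this, hall p.2 p.1]
  rfl
end
section
lemma isDer_add {D D' : B →ₗ[ℂ] B} (h : IsDer D) (h' : IsDer D') : IsDer (D + D') := by
  intro x y
  simp only [LinearMap.add_apply, h x y, h' x y, map_add, LinearMap.add_apply]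
  abel

def shiftm : ℤ × ℕ → ℤ × ℕ := fun p => (p.1 - 1, p.2)

lemma shiftm_inj : Function.Injective shiftm := by
  intro p q h
  obtain ⟨h1, h2⟩ := Prod.mk.injEq .. ▸ h
  exact Prod.ext (by omega) (by omega)

def bmake (c1 : B) (b0 : ℂ) : B :=
  tweak (Finsupp.mapDomain shiftm c1)
    (fun p v => if p.1 + (p.2 : ℤ) = 0 ∧ p ≠ (0, 0) then -v / ((p.2 : ℂ) + 1) else 0)
  + b0 • L 0 0

lemma bmake_g0 : ∀ p : ℤ × ℕ,
    (if p.1 + (p.2 : ℤ) = 0 ∧ p ≠ (0, 0) then -(0:ℂ) / ((p.2 : ℂ) + 1) else 0) = 0 := by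
  intro p; split <;> simp

lemma bmake_00 (c1 : B) (b0 : ℂ) : bmake c1 b0 (0, 0) = b0 := by
  rw [bmake, Finsupp.add_apply, tweak_apply _ _ (fun p => by split <;> simp)]
  simp [L]

lemma bmake_k (c1 : B) (b0 : ℂ) (k : ℕ) (hk : 1 ≤ k) :
    bmake c1 b0 (-(k:ℤ), k) = -(c1 (1 - (k:ℤ), k)) / ((k:ℂ) + 1) := by
  rw [bmake, Finsupp.add_apply, tweak_apply _ _ (fun p => by split <;> simp)]
  have hne : ((-(k:ℤ), k) : ℤ × ℕ) ≠ (0, 0) := by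
    intro h; obtain ⟨h1, h2⟩ := Prod.mk.injEq .. ▸ h; omega
  rw [if_pos ⟨by omega, hne⟩]
  have hmap : Finsupp.mapDomain shiftm c1 (-(k:ℤ), k) = c1 (1 - (k:ℤ), k) := by
    have : ((-(k:ℤ), k) : ℤ × ℕ) = shiftm (1 - (k:ℤ), k) := by
      simp [shiftm, Prod.ext_iff]
    rw [this, Finsupp.mapDomain_apply shiftm_inj]
  rw [hmap]
  have : (L 0 0) (-(k:ℤ), k) = 0 := L_apply_ne 0 0 _ (by
    intro h; obtain ⟨h1, h2⟩ := Prod.mk.injEq .. ▸ h; omega)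
  rw [Finsupp.smul_apply, this, smul_zero, add_zero]

lemma bmake_off (c1 : B) (b0 : ℂ) (s : ℤ) (t : ℕ) (h : s + (t:ℤ) ≠ 0) :
    bmake c1 b0 (s, t) = 0 := by
  rw [bmake, Finsupp.add_apply, tweak_apply _ _ (fun p => by split <;> simp)]
  rw [if_neg (by intro hc; exact h hc.1)]
  have : (L 0 0) (s, t) = 0 := L_apply_ne 0 0 _ (by
    intro hq; obtain ⟨h1, h2⟩ := Prod.mk.injEq .. ▸ hq; omega)
  rw [Finsupp.smul_apply, this, smul_zero, add_zero]
end
section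
lemma part1 (D : B →ₗ[ℂ] B) (hD : IsDer D) :
    ∃ (a : B) (lam : ℂ), ∀ x : B, D x = br a x + lam • dmap x := by
  set D₁ := D - br (aone D) with hD₁def
  have h1der : IsDer D₁ := isDer_sub hD (isDer_br _)
  have h100 : D₁ (L 0 0) = 0 := Done_L00 hD
  set c1 := D₁ (L 1 0) with hc1def
  set b0 : ℂ := -((D₁ (L 0 1)) (0, 1)) with hb0def
  set b := bmake c1 b0 with hbdef
  set lam := c1 (1, 0) + b0 with hlamdef
  set E := D₁ - (br b + lam • dmap) with hEdef
  have hEder : IsDer E := isDer_sub h1der (isDer_add (isDer_br b) (isDer_smul lam isDer_dmap))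
  have hbr00 : br b (L 0 0) = 0 := by
    ext p; obtain ⟨s, t⟩ := p
    have h := br_right_apply b 0 0 s t
    simp only [add_zero] at h
    rw [Finsupp.coe_zero, Pi.zero_apply, h]
    by_cases hline : s + (t:ℤ) = 0
    · have : coef (s, t) (0, 0) = 0 := by
        rw [coef_eval]
        have : ((s + t : ℤ) : ℂ) = 0 := by rw [hline]; norm_num
        push_cast at this; linear_combination this
      rw [this, mul_zero]
    · rw [bmake_off _ _ _ _ hline, zero_mul]
  have hE00 : E (L 0 0) = 0 := by
    rw [hEdef]
    simp only [LinearMap.sub_apply, LinearMap.add_apply, LinearMap.smul_apply, h100, hbr00,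
      dmap_single]
    simp
  have hE10 : E (L 1 0) = 0 := by
    apply Lzero_ext
    intro s t
    by_cases hline : s + (t:ℤ) = 1
    case neg => exact hdeg_of hEder hE00 1 0 s t (by omega)
    have hexp : (E (L 1 0)) (s, t) =
        (c1 (s, t)) - ((br b (L 1 0)) (s, t) + lam * (dmap (L 1 0)) (s, t)) := by
      rw [hEdef]
      simp only [LinearMap.sub_apply, LinearMap.add_apply, LinearMap.smul_apply,
        Finsupp.sub_apply, Finsupp.add_apply, Finsupp.smul_apply, smul_eq_mul, hc1def]
    rcases Nat.eq_zero_or_pos t with ht | ht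
    · have hs : s = 1 := by omega
      rw [hexp, hs, ht]
      have hbr : (br b (L 1 0)) (1, 0) = b0 * coef (0, 0) (1, 0) := by
        have := br_right_apply b 1 0 0 0
        simp only [zero_add, add_zero] at this
        rw [this, bmake_00]
      have hco : coef (0, 0) (1, 0) = (-1 : ℂ) := by rw [coef_eval]; norm_num
      rw [hbr, hco, dmap_single]
      simp only [Finsupp.smul_apply, L_apply_self, smul_eq_mul, mul_one, Int.cast_one]
      rw [hlamdef]
      ring
    · have hs : s = 1 - (t : ℤ) := by omega
      rw [hexp, hs]
      have hbr : (br b (L 1 0)) (1 - (t:ℤ), t) = (-(c1 (1 - (t:ℤ), t)) / ((t:ℂ) + 1)) *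
          coef (-(t:ℤ), t) (1, 0) := by
        have := br_right_apply b 1 0 (-(t:ℤ)) t
        simp only [add_zero] at this
        rw [show (-(t:ℤ) + 1) = 1 - (t:ℤ) by ring] at this
        rw [this, bmake_k _ _ t ht]
      have hco : coef (-(t:ℤ), t) (1, 0) = -((t:ℂ) + 1) := by
        rw [coef_eval]; push_cast; ring
      have hdm : (dmap (L 1 0)) (1 - (t:ℤ), t) = 0 := by
        rw [dmap_single, Finsupp.smul_apply, L_apply_ne 1 0 _ (by
          intro h; obtain ⟨h1, h2⟩ := Prod.mk.injEq .. ▸ h; omega), smul_zero]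
      rw [hbr, hco, hdm, mul_zero, add_zero]
      have htne : ((t:ℂ) + 1) ≠ 0 := Nat.cast_add_one_ne_zero t
      field_simp
      ring
  have hE01 : (E (L 0 1)) (0, 1) = 0 := by
    have hexp : (E (L 0 1)) (0, 1) =
        ((D₁ (L 0 1)) (0, 1)) - ((br b (L 0 1)) (0, 1) + lam * (dmap (L 0 1)) (0, 1)) := by
      rw [hEdef]
      simp only [LinearMap.sub_apply, LinearMap.add_apply, LinearMap.smul_apply,
        Finsupp.sub_apply, Finsupp.add_apply, Finsupp.smul_apply, smul_eq_mul]
    have hbr : (br b (L 0 1)) (0, 1) = b0 * coef (0, 0) (0, 1) := by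
      have := br_right_apply b 0 1 0 0
      simp only [zero_add, add_zero] at this
      rw [this, bmake_00]
    have hco : coef (0, 0) (0, 1) = (-1 : ℂ) := by rw [coef_eval]; norm_num
    have hdm : (dmap (L 0 1)) (0, 1) = 0 := by
      rw [dmap_single]; simp
    rw [hexp, hbr, hco, hdm, hb0def]
    ring
  have hE0 : E = 0 := E_eq_zero hEder hE00 hE10 hE01 trivial
  refine ⟨aone D + b, lam, fun x => ?_⟩
  have h := LinearMap.congr_fun hE0 x
  rw [hEdef, hD₁def] at h
  simp only [LinearMap.sub_apply, LinearMap.add_apply, LinearMap.smul_apply,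
    LinearMap.zero_apply] at h
  rw [map_add, LinearMap.add_apply]
  rw [sub_sub, sub_eq_zero] at h
  rw [h]
  abel
end
section
lemma part2 (a : B) (lam : ℂ) (h : ∀ x : B, br a x + lam • dmap x = 0) :
    lam = 0 ∧ ∀ x : B, br a x = 0 := by
  have ha00 : a (0, 0) = 0 := by
    have h1 := congrArg (fun z => z ((0:ℤ), (1:ℕ))) (h (L 0 1))
    simp only [Finsupp.add_apply, Finsupp.smul_apply, Finsupp.coe_add, Pi.add_apply,
      Finsupp.coe_zero, Pi.zero_apply, smul_eq_mul] at h1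
    have hbr : (br a (L 0 1)) (0, 1) = a (0, 0) * coef (0, 0) (0, 1) := by
      have := br_right_apply a 0 1 0 0
      simp only [zero_add, add_zero] at this
      exact this
    have hdm : (dmap (L 0 1)) ((0:ℤ), (1:ℕ)) = 0 := by rw [dmap_single]; simp
    rw [hbr, hdm, mul_zero, add_zero] at h1
    have hco : coef (0, 0) (0, 1) = (-1 : ℂ) := by rw [coef_eval]; norm_num
    rw [hco] at h1
    linear_combination -h1
  have hlam : lam = 0 := by
    have h1 := congrArg (fun z => z ((1:ℤ), (0:ℕ))) (h (L 1 0))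
    simp only [Finsupp.add_apply, Finsupp.smul_apply, Finsupp.coe_add, Pi.add_apply,
      Finsupp.coe_zero, Pi.zero_apply, smul_eq_mul] at h1
    have hbr : (br a (L 1 0)) (1, 0) = a (0, 0) * coef (0, 0) (1, 0) := by
      have := br_right_apply a 1 0 0 0
      simp only [zero_add, add_zero] at this
      exact this
    have hdm : (dmap (L 1 0)) ((1:ℤ), (0:ℕ)) = 1 := by
      rw [dmap_single]
      simp [L_apply_self]
    rw [hbr, hdm, ha00, zero_mul, zero_add, mul_one] at h1
    exact h1
  refine ⟨hlam, fun x => ?_⟩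
  have := h x
  rw [hlam, zero_smul, add_zero] at this
  exact this
end

theorem der_eq_inner_plus_d :
    (∀ D : B →ₗ[ℂ] B, IsDer D → ∃ (a : B) (lam : ℂ), ∀ x : B, D x = br a x + lam • dmap x) ∧
    (∀ (a : B) (lam : ℂ), (∀ x : B, br a x + lam • dmap x = 0) →
      lam = 0 ∧ ∀ x : B, br a x = 0) := by
  exact ⟨part1, part2⟩

end
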